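/- Let f₁(x,y,z) = 8x² + 8y² − z² and f₂(x,y,z) = z(x²+y²) − x³. For all constants C₁, C₂ ∈ ℝ, the set V(f₁ + C₁, f₂ + C₂) = {(x,y,z) ∈ ℝ³ : 8x² + 8y² − z² + C₁ = 0 and z(x²+y²) − x³ + C₂ = 0} is nonempty. -/

import Mathlib

theorem stmt13 (C₁ C₂ : ℝ) :
    ∃ x y z : ℝ,
      8 * x ^ 2 + 8 * y ^ 2 - z ^ 2 + C₁ = 0 ∧
      z * (x ^ 2 + y ^ 2) - x ^ 3 + C₂ = 0 := by
  by_cases hC₂ : C₂ = 0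
  · subst hC₂
    by_cases hC₁ : 0 ≤ C₁
    · refine ⟨0, 0, Real.sqrt C₁, ?_, by ring⟩
      have h := Real.sq_sqrt hC₁
      nlinarith [h]
    · refine ⟨0, Real.sqrt (-C₁ / 8), 0, ?_, by ring⟩
      have h : (0:ℝ) ≤ -C₁ / 8 := by linarith
      have h2 := Real.sq_sqrt h
      nlinarith [h2]
  · set M : ℝ := |C₁| + |C₂| + 1 with hM
    have hM1 : (1:ℝ) ≤ M := by
      have := abs_nonneg C₁; have := abs_nonneg C₂; simp [hM]; linarith
    have hM0 : (0:ℝ) ≤ M := by linarith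
    set g : ℝ → ℝ := fun t => 8 * t ^ 3 + C₁ * t ^ 2 - C₂ ^ 2 with hg
    have hcont : ContinuousOn g (Set.Icc 0 M) := by
      apply Continuous.continuousOn; continuity
    have hg0 : g 0 < 0 := by
      simp [hg]
      positivity
    have hgM : 0 ≤ g M := by
      have h1 : C₁ ≥ -|C₁| := neg_abs_le C₁
      have h2 : |C₂| ≥ C₂ := le_abs_self C₂
      have h3 : |C₂| ≥ -C₂ := neg_le_abs C₂
      have := abs_nonneg C₁; have := abs_nonneg C₂
      simp only [hg, hM]
      nlinarith [sq_nonneg (|C₁| + |C₂|), sq_nonneg (|C₂| + 1), abs_nonneg C₁, abs_nonneg C₂]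
    have hIVT := intermediate_value_Icc hM0 hcont
    have hmem : (0:ℝ) ∈ Set.Icc (g 0) (g M) := ⟨le_of_lt hg0, hgM⟩
    obtain ⟨t, ht, hgt⟩ := hIVT hmem
    have ht0 : 0 < t := by
      rcases lt_or_eq_of_le ht.1 with h | h
      · exact h
      · exfalso; rw [← h] at hgt; linarith
    have htne : t ≠ 0 := ne_of_gt ht0
    have key : 8 * t ^ 3 + C₁ * t ^ 2 = C₂ ^ 2 := by
      have : g t = 0 := hgt
      simp [hg] at this; linarith
    refine ⟨0, Real.sqrt t, -C₂ / t, ?_, ?_⟩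
    · have hy := Real.sq_sqrt (le_of_lt ht0)
      have hz : (-C₂ / t) ^ 2 = 8 * t + C₁ := by
        field_simp
        nlinarith [key]
      rw [hz, hy]; ring
    · have hy := Real.sq_sqrt (le_of_lt ht0)
      rw [hy]; field_simp; ring
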